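/- Fix an integer ℓ ≥ 1 and define P_IS : ℕ × ℕ → ℕ by the recurrence P_IS(m,s) = min( min_{1≤m̃≤m−1} (m̃ + P_IS(m̃,s) + P_IS(m−m̃,s−1)), min_{1≤m̃≤m} (m̃−1 + P_IS(m̃−1,s) + P_IS(m−m̃,s−ℓ)) ), with P_IS(0,s)=0, P_IS(1,s)=0 for s ≥ 0, and P_IS(m,s)=+∞ when s < 0 is required. Then for all m, s, P_IS(m,s) ≤ p(m,s) where p(m,s) is the classical Revolve optimum t·m − C(s+t,t−1). -/

import Mathlib

theorem stmt5 (ℓ : ℕ) (hℓ : 1 ≤ ℓ) (PIS : ℕ → ℤ → ℕ∞)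
    (hneg : ∀ (m : ℕ) (s : ℤ), s < 0 → PIS m s = ⊤)
    (h0 : ∀ s : ℤ, 0 ≤ s → PIS 0 s = 0)
    (h1 : ∀ s : ℤ, 0 ≤ s → PIS 1 s = 0)
    (hrec : ∀ (m : ℕ) (s : ℤ), 2 ≤ m → 0 ≤ s →
      PIS m s = min
        (⨅ k ∈ Finset.Icc 1 (m - 1),
          ((k : ℕ∞) + PIS k s + PIS (m - k) (s - 1)))
        (⨅ k ∈ Finset.Icc 1 m,
          (((k - 1 : ℕ) : ℕ∞) + PIS (k - 1) s + PIS (m - k) (s - (ℓ : ℤ))))) :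
    ∀ m s t q : ℕ, 1 ≤ m → 1 ≤ s →
      ((if t = 0 then 0 else (s + t - 1).choose (t - 1)) < m ∧ m ≤ (s + t).choose t) →
      (q : ℤ) = (t : ℤ) * m - (if t = 0 then 0 else ((s + t).choose (t - 1) : ℤ)) →
      PIS m (s : ℤ) ≤ (q : ℕ∞) := by
  have hstep : ∀ (m : ℕ) (s : ℤ), 2 ≤ m → 0 ≤ s → ∀ k ∈ Finset.Icc 1 (m - 1),
      PIS m s ≤ (k : ℕ∞) + PIS k s + PIS (m - k) (s - 1) := by
    intro m s hm hs k hk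
    rw [hrec m s hm hs]
    exact le_trans (min_le_left _ _) (iInf₂_le k hk)
  have aux : ∀ m s t : ℕ, 1 ≤ m → 1 ≤ s →
      (if t = 0 then 0 else (s + t - 1).choose (t - 1)) < m → m ≤ (s + t).choose t →
      ∃ q : ℕ, (q : ℤ) = (t : ℤ) * m - (if t = 0 then 0 else ((s + t).choose (t - 1) : ℤ)) ∧
        PIS m (s : ℤ) ≤ (q : ℕ∞) := by
    intro m
    induction m using Nat.strong_induction_on with
    | _ m IH =>
      intro s t hm hs hlb hub
      rcases eq_or_lt_of_le hm with h1m | h2m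
      · -- m = 1
        obtain rfl : m = 1 := h1m.symm
        obtain rfl : t = 0 := by
          rcases t with _ | t'
          · rfl
          · exfalso
            rw [if_neg (by omega)] at hlb
            have := Nat.choose_pos (show t' + 1 - 1 ≤ s + (t'+1) - 1 by omega)
            omega
        refine ⟨0, by simp, ?_⟩
        rw [h1 s (by positivity)]
        simp
      · -- 2 ≤ m
        rcases t with _ | t'
        · exfalso; simp at hub; omega
        rcases t' with _ | t''
        · -- t = 1
          rw [if_neg (by omega)] at hlb
          have hub' : m ≤ s + 1 := by
            rwa [Nat.choose_one_right] at hub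
          rcases eq_or_lt_of_le (show 2 ≤ m from h2m) with h2 | h3m
          · -- m = 2
            obtain rfl : m = 2 := h2.symm
            refine ⟨1, ?_, ?_⟩
            · rw [if_neg (by omega)]
              simp
            · have hb := hstep 2 s (by omega) (by positivity) 1 (by simp)
              rw [h1 s (by positivity)] at hb
              rw [show ((s:ℤ) - 1) = ((s - 1 : ℕ) : ℤ) by push_cast [Nat.cast_sub hs]; ring] at hb
              rw [h1 _ (by positivity)] at hb
              simpa using hb
          · -- m ≥ 3, hence s ≥ 2
            have hs2 : 2 ≤ s := by omega
            obtain ⟨s', rfl⟩ : ∃ s', s = s' + 2 := ⟨s - 2, by omega⟩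
            -- split k = 1, chunk (m-1, s-1, t=1)
            obtain ⟨q₂, hq₂, hb₂⟩ := IH (m - 1) (by omega) (s' + 1) 1 (by omega) (by omega)
              (by rw [if_neg (by omega)]; simpa using (by omega : 1 < m - 1)) 
              (by rw [Nat.choose_one_right]; omega)
            refine ⟨1 + q₂, ?_, ?_⟩
            · rw [if_neg (by omega)] at hq₂ ⊢
              rw [Nat.choose_zero_right] at hq₂ ⊢
              push_cast at hq₂ ⊢
              push_cast [show (1:ℕ) - 1 = 0 from rfl] at hq₂
              omega
            · have hb := hstep m (s' + 2 : ℕ) (by omega) (by positivity) 1 (by simp; omega)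
              rw [h1 _ (by positivity)] at hb
              rw [show (((s' + 2 : ℕ)):ℤ) - 1 = ((s' + 1 : ℕ) : ℤ) by push_cast; ring] at hb
              calc PIS m ((s' + 2 : ℕ) : ℤ) ≤ (1 : ℕ∞) + 0 + PIS (m - 1) ((s' + 1 : ℕ):ℤ) := hb
                _ ≤ (1 : ℕ∞) + 0 + (q₂ : ℕ∞) := by gcongr
                _ = ((1 + q₂ : ℕ) : ℕ∞) := by push_cast; ring
        · -- t = t'' + 2
          rw [if_neg (by omega)] at hlb
          rw [show s + (t'' + 1 + 1) - 1 = s + t'' + 1 by omega,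
              show t'' + 1 + 1 - 1 = t'' + 1 by omega] at hlb
          have hm3 : 3 ≤ m := by
            have h1' := Nat.choose_le_choose (t''+1) (show t''+2 ≤ s + t'' + 1 by omega)
            rw [Nat.choose_succ_self_right] at h1'
            omega
          rcases eq_or_lt_of_le hs with hs1 | hs2
          · -- s = 1
            obtain rfl : s = 1 := hs1.symm
            rw [show 1 + (t''+1+1) = t''+3 by omega] at hub
            rw [Nat.choose_succ_self_right] at hub
            rw [show 1 + t'' + 1 = t'' + 2 by omega, Nat.choose_succ_self_right] at hlb
            have hmeq : m = t'' + 3 := by omega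
            -- chunk (m-1, 1, t''+1)
            obtain ⟨q₁, hq₁, hb₁⟩ := IH (m - 1) (by omega) 1 (t'' + 1) (by omega) (by omega)
              (by rw [if_neg (by omega), show 1 + (t''+1) - 1 = t''+1 by omega,
                    show t''+1-1 = t'' by omega, Nat.choose_succ_self_right]; omega)
              (by rw [show 1 + (t''+1) = t''+2 by omega, Nat.choose_succ_self_right]; omega)
            refine ⟨(m - 1) + q₁, ?_, ?_⟩
            · rw [if_neg (by omega)] at hq₁ ⊢
              rw [show 1 + (t''+1) = t''+2 by omega, show t''+1-1 = t'' by omega] at hq₁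
              rw [show 1 + (t''+1+1) = t''+3 by omega, show t''+1+1-1 = t''+1 by omega]
              have hP : (t''+3).choose (t''+1) = (t''+2).choose t'' + (t''+2).choose (t''+1) :=
                Nat.choose_succ_succ _ _
              have hC : (t''+2).choose (t''+1) = t''+2 := Nat.choose_succ_self_right _
              have hm1 : ((m - 1 : ℕ) : ℤ) = (m : ℤ) - 1 := by push_cast [Nat.cast_sub (by omega : 1 ≤ m)]; ring
              have hmz : (m : ℤ) = (t'' : ℤ) + 3 := by exact_mod_cast congrArg (Nat.cast : ℕ → ℤ) hmeq
              push_cast at hq₁ ⊢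
              rw [hm1] at hq₁ ⊢
              rw [hmz] at hq₁ ⊢
              have hPz : ((t''+3).choose (t''+1) : ℤ) = ((t''+2).choose t'' : ℤ) + ((t''+2).choose (t''+1) : ℤ) := by exact_mod_cast hP
              have hCz : ((t''+2).choose (t''+1) : ℤ) = (t'':ℤ) + 2 := by exact_mod_cast hC
              linear_combination hq₁ + hPz + hCz
            · have hb := hstep m (1 : ℕ) (by omega) (by positivity) (m - 1) (by simp; omega)
              rw [show (((1:ℕ)):ℤ) - 1 = ((0 : ℤ)) by norm_num] at hb
              rw [show m - (m - 1) = 1 by omega] at hb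
              rw [h1 0 le_rfl] at hb
              calc PIS m ((1:ℕ):ℤ) ≤ ((m - 1 : ℕ) : ℕ∞) + PIS (m-1) ((1:ℕ):ℤ) + 0 := hb
                _ ≤ ((m - 1 : ℕ) : ℕ∞) + (q₁ : ℕ∞) + 0 := by gcongr
                _ = (((m - 1) + q₁ : ℕ) : ℕ∞) := by push_cast; ring
          · -- s ≥ 2, t = t''+2 : main case
            obtain ⟨s', rfl⟩ : ∃ s', s = s' + 2 := ⟨s - 2, by omega⟩
            rw [show s' + 2 + t'' + 1 = s' + t'' + 3 by omega] at hlb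
            rw [show s' + 2 + (t''+1+1) = s' + t'' + 4 by omega,
                show t'' + 1 + 1 = t'' + 2 by omega] at hub
            set A := (s' + t'' + 2).choose t'' with hAdef
            set D := (s' + t'' + 3).choose (t''+2) with hDdef
            have hApos : 0 < A := Nat.choose_pos (by omega)
            have hDpos : 0 < D := Nat.choose_pos (by omega)
            have hP1 : (s' + t'' + 4).choose (t''+2)
                = (s' + t'' + 3).choose (t''+1) + (s' + t'' + 3).choose (t''+2) := by
              exact Nat.choose_succ_succ (s' + t'' + 3) (t''+1)
            have hP2 : (s' + t'' + 3).choose (t''+1)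
                = (s' + t'' + 2).choose t'' + (s' + t'' + 2).choose (t''+1) := by
              exact Nat.choose_succ_succ (s' + t'' + 2) t''
            have hP2' : (s' + t'' + 3).choose (t''+2)
                = (s' + t'' + 2).choose (t''+1) + (s' + t'' + 2).choose (t''+2) := by
              exact Nat.choose_succ_succ (s' + t'' + 2) (t''+1)
            have hP3 : (s' + t'' + 4).choose (t''+1)
                = (s' + t'' + 3).choose t'' + (s' + t'' + 3).choose (t''+1) := by
              exact Nat.choose_succ_succ (s' + t'' + 3) t''
            have hpos2 : 0 < (s' + t'' + 2).choose (t''+2) := Nat.choose_pos (by omega)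
            have hAG : ((s' + t'' + 3).choose t'' : ℤ)
                = ((s' + t'' + 2).choose t'' : ℤ)
                  + (if t'' = 0 then 0 else ((s' + 2 + t'').choose (t'' - 1) : ℤ)) := by
              rcases t'' with _ | t₃
              · simp
              · rw [if_neg (by omega)]
                rw [show s' + 2 + (t₃+1) = s' + t₃ + 3 by omega,
                    show t₃ + 1 - 1 = t₃ by omega,
                    show s' + (t₃+1) + 3 = s' + t₃ + 4 by omega,
                    show s' + (t₃+1) + 2 = s' + t₃ + 3 by omega]
                have := Nat.choose_succ_succ (s' + t₃ + 3) t₃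
                push_cast [this]; ring
            rcases le_or_gt (m - D) A with hcase | hcase
            · -- Case I : first chunk has size A
              have hAm : A < m := by omega
              obtain ⟨q₁, hq₁, hb₁⟩ := IH A hAm (s' + 2) t'' (by omega) (by omega)
                (by rcases t'' with _ | t₃
                    · simpa [hAdef] using hApos
                    · rw [if_neg (by omega),
                          show s' + 2 + (t₃+1) - 1 = s' + t₃ + 2 by omega,
                          show t₃ + 1 - 1 = t₃ by omega]
                      have h5 : (s' + t₃ + 3).choose (t₃+1)
                          = (s' + t₃ + 2).choose t₃ + (s' + t₃ + 2).choose (t₃+1) :=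
                        Nat.choose_succ_succ _ _
                      have h6 : 0 < (s' + t₃ + 2).choose (t₃+1) := Nat.choose_pos (by omega)
                      rw [hAdef, show s' + (t₃+1) + 2 = s' + t₃ + 3 by omega]
                      omega)
                (by rw [hAdef, show s' + 2 + t'' = s' + t'' + 2 by omega])
              obtain ⟨q₂, hq₂, hb₂⟩ := IH (m - A) (by omega) (s' + 1) (t'' + 2) (by omega) (by omega)
                (by rw [if_neg (by omega),
                        show s' + 1 + (t''+2) - 1 = s' + t'' + 2 by omega,
                        show t'' + 2 - 1 = t'' + 1 by omega]
                    omega)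
                (by rw [show s' + 1 + (t''+2) = s' + t'' + 3 by omega]; omega)
              refine ⟨A + q₁ + q₂, ?_, ?_⟩
              · rw [if_neg (by omega),
                    show s' + 2 + (t''+1+1) = s' + t'' + 4 by omega,
                    show t'' + 1 + 1 - 1 = t'' + 1 by omega]
                rw [if_neg (by omega),
                    show s' + 1 + (t''+2) = s' + t'' + 3 by omega,
                    show t'' + 2 - 1 = t'' + 1 by omega] at hq₂
                have hma : ((m - A : ℕ) : ℤ) = (m : ℤ) - (A : ℤ) := by
                  push_cast [Nat.cast_sub hAm.le]; ring
                have hP3z : ((s' + t'' + 4).choose (t''+1) : ℤ)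
                    = ((s' + t'' + 3).choose t'' : ℤ) + ((s' + t'' + 3).choose (t''+1) : ℤ) := by
                  exact_mod_cast hP3
                push_cast
                rw [hq₁, hq₂, hma, hP3z, hAG]
                push_cast [hAdef]
                ring
              · have hk : A ∈ Finset.Icc 1 (m - 1) := by
                  simp only [Finset.mem_Icc]; omega
                have hb := hstep m ((s' + 2 : ℕ) : ℤ) (by omega) (by positivity) A hk
                rw [show (((s' + 2 : ℕ)) : ℤ) - 1 = ((s' + 1 : ℕ) : ℤ) by push_cast; ring] at hb
                calc PIS m ((s' + 2 : ℕ) : ℤ)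
                    ≤ (A : ℕ∞) + PIS A ((s' + 2 : ℕ) : ℤ) + PIS (m - A) ((s' + 1 : ℕ) : ℤ) := hb
                  _ ≤ (A : ℕ∞) + (q₁ : ℕ∞) + (q₂ : ℕ∞) := by gcongr
                  _ = ((A + q₁ + q₂ : ℕ) : ℕ∞) := by push_cast; ring
            · -- Case II : first chunk has size m - D
              have hDm : D < m := by omega
              obtain ⟨q₁, hq₁, hb₁⟩ := IH (m - D) (by omega) (s' + 2) (t'' + 1) (by omega) (by omega)
                (by rw [if_neg (by omega),
                        show s' + 2 + (t''+1) - 1 = s' + t'' + 2 by omega,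
                        show t'' + 1 - 1 = t'' by omega]
                    omega)
                (by rw [show s' + 2 + (t''+1) = s' + t'' + 3 by omega]; omega)
              obtain ⟨q₂, hq₂, hb₂⟩ := IH D (by omega) (s' + 1) (t'' + 2) (by omega) (by omega)
                (by rw [if_neg (by omega),
                        show s' + 1 + (t''+2) - 1 = s' + t'' + 2 by omega,
                        show t'' + 2 - 1 = t'' + 1 by omega]
                    omega)
                (by rw [hDdef, show s' + 1 + (t''+2) = s' + t'' + 3 by omega])
              refine ⟨(m - D) + q₁ + q₂, ?_, ?_⟩
              · rw [if_neg (by omega),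
                    show s' + 2 + (t''+1+1) = s' + t'' + 4 by omega,
                    show t'' + 1 + 1 - 1 = t'' + 1 by omega]
                rw [if_neg (by omega),
                    show s' + 2 + (t''+1) = s' + t'' + 3 by omega,
                    show t'' + 1 - 1 = t'' by omega] at hq₁
                rw [if_neg (by omega),
                    show s' + 1 + (t''+2) = s' + t'' + 3 by omega,
                    show t'' + 2 - 1 = t'' + 1 by omega] at hq₂
                have hmd : ((m - D : ℕ) : ℤ) = (m : ℤ) - (D : ℤ) := by
                  push_cast [Nat.cast_sub hDm.le]; ring
                have hP3z : ((s' + t'' + 4).choose (t''+1) : ℤ)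
                    = ((s' + t'' + 3).choose t'' : ℤ) + ((s' + t'' + 3).choose (t''+1) : ℤ) := by
                  exact_mod_cast hP3
                push_cast
                rw [hq₁, hq₂, hmd, hP3z]
                push_cast [hDdef]
                ring
              · have hk : m - D ∈ Finset.Icc 1 (m - 1) := by
                  simp only [Finset.mem_Icc]; omega
                have hb := hstep m ((s' + 2 : ℕ) : ℤ) (by omega) (by positivity) (m - D) hk
                rw [show (((s' + 2 : ℕ)) : ℤ) - 1 = ((s' + 1 : ℕ) : ℤ) by push_cast; ring] at hb
                rw [show m - (m - D) = D by omega] at hb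
                calc PIS m ((s' + 2 : ℕ) : ℤ)
                    ≤ ((m - D : ℕ) : ℕ∞) + PIS (m - D) ((s' + 2 : ℕ) : ℤ) + PIS D ((s' + 1 : ℕ) : ℤ) := hb
                  _ ≤ ((m - D : ℕ) : ℕ∞) + (q₁ : ℕ∞) + (q₂ : ℕ∞) := by gcongr
                  _ = (((m - D) + q₁ + q₂ : ℕ) : ℕ∞) := by push_cast; ring

  intro m s t q hm hs ⟨hlb, hub⟩ hq
  obtain ⟨q₀, hq₀, hb⟩ := aux m s t hm hs hlb hub
  obtain rfl : q = q₀ := by exact_mod_cast hq.trans hq₀.symm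
  exact hb
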